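/- Let (O,*,n) be an Okubo algebra over a field k of characteristic ≠ 2, 3, equipped with a grading O = ⊕_{g∈Z₃²} O_g by the group Z₃² = (Z/3)² such that O_0 = 0 and dim O_g = 1 for every g ≠ 0 (a standard Z₃²-grading). For μ ∈ Z₃² set o(O,n)_μ := {d ∈ o(O,n) : d(O_γ) ⊆ O_{γ+μ} for all γ ∈ Z₃²}. Then o(O,n) = ⊕_{μ∈Z₃²} o(O,n)_μ is a grading of the Lie algebra o(O,n), the component o(O,n)_0 is a 4-dimensional Cartan subalgebra of o(O,n), and dim o(O,n)_μ = 3 for every μ ≠ 0. -/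

import Mathlib

open QuadraticMap

namespace OkuboAux

abbrev G3 := ZMod 3 × ZMod 3

variable {k : Type*} [Field k] {O : Type*} [AddCommGroup O] [Module k O]

/-- Bundled hypotheses about a standard grading. -/
structure Setup (n : QuadraticForm k O) (A : G3 → Submodule k O) (e : G3 → O) : Prop where
  nondeg : ∀ x : O, (∀ y : O, polar n x y = 0) → x = 0
  sup : iSup A = ⊤
  ind : iSupIndep A
  zero : A 0 = ⊥
  emem : ∀ g, e g ∈ A g
  ene : ∀ g, g ≠ 0 → e g ≠ 0
  espan : ∀ g, A g = Submodule.span k {e g}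
  orth : ∀ a b : G3, a + b ≠ 0 → ∀ x ∈ A a, ∀ y ∈ A b, polar n x y = 0
  two : (2:k) ≠ 0

variable {n : QuadraticForm k O} {A : G3 → Submodule k O} {e : G3 → O}

noncomputable def bet (n : QuadraticForm k O) (e : G3 → O) (g : G3) : k :=
  polar n (e g) (e (-g))

noncomputable def RkO (n : QuadraticForm k O) (e : G3 → O) (g : G3) (v : O) :
    Module.End k O :=
  (bet n e g)⁻¹ • (n.polarBilin (e (-g))).smulRight v

lemma RkO_apply (g : G3) (v x : O) :
    RkO n e g v x = ((bet n e g)⁻¹ * polar n (e (-g)) x) • v := by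
  simp [RkO, mul_smul, polarBilin]

lemma bet_neg (g : G3) : bet n e (-g) = bet n e g := by
  rw [bet, bet, neg_neg, polar_comm]

lemma exists_scalar (S : Setup n A e) {g : G3} {x : O} (hx : x ∈ A g) :
    ∃ t : k, x = t • e g := by
  rw [S.espan g, Submodule.mem_span_singleton] at hx
  obtain ⟨t, ht⟩ := hx
  exact ⟨t, ht.symm⟩

lemma bet_ne (S : Setup n A e) {g : G3} (hg : g ≠ 0) : bet n e g ≠ 0 := by
  intro h0
  apply S.ene g hg
  apply S.nondeg
  -- show polar n (e g) y = 0 for all y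
  intro y
  have hy : y ∈ (⊤ : Submodule k O) := trivial
  rw [← S.sup] at hy
  refine Submodule.iSup_induction A (motive := fun y => polar n (e g) y = 0) hy ?_ ?_ ?_
  · intro c z hz
    rcases eq_or_ne c (-g) with rfl | hc
    · obtain ⟨t, rfl⟩ := exists_scalar S hz
      rw [polar_smul_right]
      rw [bet] at h0
      simp [h0]
    · exact S.orth g c (fun h => hc (by rw [← neg_add_cancel_left g c, h, add_zero]))
        (e g) (S.emem g) z hz
  · simp [polar]
  · intro a b ha hb
    rw [polar_add_right, ha, hb, add_zero]

lemma RkO_same (S : Setup n A e) {g : G3} (hg : g ≠ 0) (v : O) :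
    RkO n e g v (e g) = v := by
  rw [RkO_apply]
  have : polar n (e (-g)) (e g) = bet n e g := by
    rw [← bet_neg]; rw [bet, neg_neg]
  rw [this, inv_mul_cancel₀ (bet_ne S hg), one_smul]

lemma RkO_ne (S : Setup n A e) {g c : G3} (hc : c ≠ g) (v : O) {x : O} (hx : x ∈ A c) :
    RkO n e g v x = 0 := by
  rw [RkO_apply]
  have : polar n (e (-g)) x = 0 := by
    refine S.orth (-g) c ?_ (e (-g)) (S.emem (-g)) x hx
    intro h
    exact hc (by rw [← neg_neg g, ← neg_add_cancel_left (-g) c, h, add_zero])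
  rw [this, mul_zero, zero_smul]

lemma RkO_mem {W : Submodule k O} (g : G3) {v : O} (hv : v ∈ W) (x : O) :
    RkO n e g v x ∈ W := by
  rw [RkO_apply]; exact W.smul_mem _ hv

/-- The projection onto `A g`. -/
noncomputable def piA (n : QuadraticForm k O) (e : G3 → O) (g : G3) : Module.End k O :=
  RkO n e g (e g)

lemma piA_mem (S : Setup n A e) (g : G3) (x : O) : piA n e g x ∈ A g :=
  RkO_mem g (S.emem g) x

lemma piA_self (S : Setup n A e) {g : G3} {x : O} (hx : x ∈ A g) : piA n e g x = x := by
  rcases eq_or_ne g 0 with rfl | hg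
  · rw [S.zero, Submodule.mem_bot] at hx
    rw [hx, map_zero]
  · obtain ⟨t, rfl⟩ := exists_scalar S hx
    rw [_root_.map_smul, piA, RkO_same S hg]

lemma piA_ne (S : Setup n A e) {g c : G3} (hc : c ≠ g) {x : O} (hx : x ∈ A c) :
    piA n e g x = 0 :=
  RkO_ne S hc _ hx

/-- Extensionality for endomorphisms agreeing on each `A g`. -/
lemma ext_on (S : Setup n A e) {f f' : Module.End k O}
    (h : ∀ g : G3, ∀ x ∈ A g, f x = f' x) : f = f' := by
  ext x
  have hx : x ∈ (⊤ : Submodule k O) := trivial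
  rw [← S.sup] at hx
  refine Submodule.iSup_induction A (motive := fun x => f x = f' x) hx ?_ ?_ ?_
  · exact h
  · simp
  · intro a b ha hb; rw [map_add, map_add, ha, hb]

lemma sum_piA (S : Setup n A e) : ∑ g : G3, piA n e g = LinearMap.id := by
  apply ext_on S
  intro c x hx
  rw [LinearMap.sum_apply, LinearMap.id_apply]
  rw [Finset.sum_eq_single c]
  · exact piA_self S hx
  · intro g _ hg
    exact piA_ne S (Ne.symm hg) hx
  · intro h; exact absurd (Finset.mem_univ c) h


/-- skewness -/
def Skew (n : QuadraticForm k O) (d : Module.End k O) : Prop :=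
  ∀ x y : O, polar n (d x) y + polar n x (d y) = 0

def Graded (A : G3 → Submodule k O) (μ : G3) (d : Module.End k O) : Prop :=
  ∀ γ : G3, ∀ z ∈ A γ, d z ∈ A (γ + μ)

lemma skew_of_homog (S : Setup n A e) {d : Module.End k O}
    (h : ∀ a b : G3, ∀ x ∈ A a, ∀ y ∈ A b,
      polar n (d x) y + polar n x (d y) = 0) : Skew n d := by
  intro x y
  have key : ∀ a : G3, ∀ x ∈ A a, ∀ y : O, polar n (d x) y + polar n x (d y) = 0 := by
    intro a x hx y
    have hy : y ∈ (⊤ : Submodule k O) := trivial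
    rw [← S.sup] at hy
    refine Submodule.iSup_induction A
      (motive := fun y => polar n (d x) y + polar n x (d y) = 0) hy ?_ ?_ ?_
    · intro b z hz; exact h a b x hx z hz
    · simp [polar]
    · intro u v hu hv
      rw [map_add, polar_add_right, polar_add_right]
      linear_combination hu + hv
  have hx : x ∈ (⊤ : Submodule k O) := trivial
  rw [← S.sup] at hx
  refine Submodule.iSup_induction A
    (motive := fun x => polar n (d x) y + polar n x (d y) = 0) hx ?_ ?_ ?_
  · intro a z hz; exact key a z hz y
  · simp [polar]
  · intro u v hu hv
    rw [map_add, polar_add_left, polar_add_left]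
    linear_combination hu + hv

lemma skew_bracket {d d' : Module.End k O} (hd : Skew n d) (hd' : Skew n d') :
    Skew n (d * d' - d' * d) := by
  have key : ∀ (f : Module.End k O), Skew n f →
      ∀ u v : O, polar n (f u) v = -polar n u (f v) := by
    intro f hf u v
    have h := hf u v; linear_combination h
  intro x y
  simp only [LinearMap.sub_apply, Module.End.mul_apply, polar_sub_left, polar_sub_right]
  rw [key d hd (d' x) y, key d' hd' x (d y), key d' hd' (d x) y, key d hd x (d' y)]
  ring

lemma graded_bracket {μ ν : G3} {d d' : Module.End k O}
    (hd : Graded A μ d) (hd' : Graded A ν d') :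
    Graded A (μ + ν) (d * d' - d' * d) := by
  intro γ z hz
  simp only [LinearMap.sub_apply, Module.End.mul_apply]
  apply sub_mem
  · have h1 := hd (γ + ν) (d' z) (hd' γ z hz)
    have : γ + ν + μ = γ + (μ + ν) := by abel
    rwa [this] at h1
  · have h1 := hd' (γ + μ) (d z) (hd γ z hz)
    have : γ + μ + ν = γ + (μ + ν) := by abel
    rwa [this] at h1

/-- the submodule of degree-`μ` skew endomorphisms -/
noncomputable def Vsub (n : QuadraticForm k O) (A : G3 → Submodule k O) (μ : G3) :
    Submodule k (Module.End k O) where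
  carrier := {d | Skew n d ∧ Graded A μ d}
  add_mem' := by
    rintro d d' ⟨hd1, hd2⟩ ⟨hd'1, hd'2⟩
    constructor
    · intro x y
      simp only [LinearMap.add_apply, polar_add_left, polar_add_right]
      linear_combination hd1 x y + hd'1 x y
    · intro γ z hz
      exact add_mem (hd2 γ z hz) (hd'2 γ z hz)
  zero_mem' := by
    constructor
    · intro x y; simp [polar]
    · intro γ z hz; simp
  smul_mem' := by
    rintro c d ⟨hd1, hd2⟩
    constructor
    · intro x y
      simp only [LinearMap.smul_apply, polar_smul_left, polar_smul_right, smul_eq_mul]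
      have := hd1 x y
      calc c * polar n (d x) y + c * polar n x (d y)
          = c * (polar n (d x) y + polar n x (d y)) := by ring
        _ = 0 := by rw [hd1 x y, mul_zero]
    · intro γ z hz
      simp only [LinearMap.smul_apply]
      exact Submodule.smul_mem _ _ (hd2 γ z hz)

lemma mem_Vsub {μ : G3} {d : Module.End k O} :
    d ∈ Vsub n A μ ↔ Skew n d ∧ Graded A μ d := Iff.rfl

/-- The degree-`μ` component of an endomorphism. -/
noncomputable def Fdec (n : QuadraticForm k O) (e : G3 → O) (d : Module.End k O)
    (μ : G3) : Module.End k O :=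
  ∑ g : G3, piA n e (g + μ) * d * piA n e g

lemma Fdec_on (S : Setup n A e) {γ : G3} {x : O} (hx : x ∈ A γ)
    (d : Module.End k O) (μ : G3) :
    Fdec n e d μ x = piA n e (γ + μ) (d x) := by
  rw [Fdec, LinearMap.sum_apply, Finset.sum_eq_single γ]
  · simp [Module.End.mul_apply, piA_self S hx]
  · intro g _ hg
    simp [Module.End.mul_apply, piA_ne S (Ne.symm hg) hx]
  · intro h; exact absurd (Finset.mem_univ γ) h

lemma polar_piA (S : Setup n A e) {b : G3} {y : O} (hy : y ∈ A b) (z : O) :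
    polar n (piA n e (-b) z) y = polar n z y := by
  have hz : z = ∑ g : G3, piA n e g z := by
    rw [← LinearMap.sum_apply, sum_piA S, LinearMap.id_apply]
  have key : polar n z y = ∑ g : G3, polar n (piA n e g z) y := by
    conv_lhs => rw [hz, ← polarBilin_apply_apply, map_sum, LinearMap.sum_apply]
    simp only [polarBilin_apply_apply]
  rw [key, Finset.sum_eq_single (-b)
    (fun g _ hg => S.orth g b (fun h => hg (eq_neg_of_add_eq_zero_left h)) _
      (piA_mem S g z) y hy)
    (fun h => absurd (Finset.mem_univ (-b)) h)]

lemma Fdec_graded (S : Setup n A e) (d : Module.End k O) (μ : G3) :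
    Graded A μ (Fdec n e d μ) := fun γ z hz => by
  rw [Fdec_on S hz]; exact piA_mem S _ _

lemma Fdec_sum (S : Setup n A e) (d : Module.End k O) :
    d = ∑ μ : G3, Fdec n e d μ := by
  apply ext_on S
  intro γ x hx
  rw [LinearMap.sum_apply, Finset.sum_congr rfl (fun μ _ => Fdec_on S hx d μ)]
  have hre : ∑ μ : G3, piA n e (γ + μ) (d x) = ∑ c : G3, piA n e c (d x) :=
    Fintype.sum_equiv (Equiv.addLeft γ) _ _ (fun μ => rfl)
  rw [hre, ← LinearMap.sum_apply, sum_piA S, LinearMap.id_apply]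

lemma Fdec_skew (S : Setup n A e) {d : Module.End k O} (hd : Skew n d) (μ : G3) :
    Skew n (Fdec n e d μ) := by
  apply skew_of_homog S
  intro a b x hx y hy
  rw [Fdec_on S hx, Fdec_on S hy]
  rcases eq_or_ne (a + μ + b) 0 with h0 | h0
  · have hb : b = -(a + μ) := eq_neg_of_add_eq_zero_right h0
    have h1 : polar n (piA n e (a + μ) (d x)) y = polar n (d x) y := by
      rw [show a + μ = -b by rw [hb, neg_neg]]
      exact polar_piA S hy (d x)
    have h2 : polar n x (piA n e (b + μ) (d y)) = polar n x (d y) := by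
      rw [polar_comm, polar_comm (⇑n) x (d y)]
      have h0' : a + (b + μ) = 0 := by rw [← h0]; abel
      rw [show b + μ = -a from eq_neg_of_add_eq_zero_right h0']
      exact polar_piA S hx (d y)
    rw [h1, h2]; exact hd x y
  · have h1 : polar n (piA n e (a + μ) (d x)) y = 0 :=
      S.orth (a + μ) b h0 _ (piA_mem S _ _) y hy
    have h2 : polar n x (piA n e (b + μ) (d y)) = 0 := by
      rw [polar_comm]
      refine S.orth (b + μ) a (fun h => h0 ?_) _ (piA_mem S _ _) x hx
      rw [← h]; abel
    rw [h1, h2, add_zero]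

lemma Fdec_unique (S : Setup n A e) {d : Module.End k O} {f : G3 → Module.End k O}
    (hgr : ∀ μ, Graded A μ (f μ)) (hsum : d = ∑ μ : G3, f μ) (μ : G3) :
    f μ = Fdec n e d μ := by
  apply ext_on S
  intro γ x hx
  rw [Fdec_on S hx, hsum, LinearMap.sum_apply, map_sum, Finset.sum_eq_single μ]
  · exact (piA_self S (hgr μ γ x hx)).symm
  · intro ν _ hν
    exact piA_ne S (fun h => hν (add_left_cancel h)) (hgr ν γ x hx)
  · intro h; exact absurd (Finset.mem_univ μ) h



lemma G3_two (g : G3) (h : g + g = 0) : g = 0 := by revert g h; decide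

lemma neg_ne_self {g : G3} (hg : g ≠ 0) : -g ≠ g := by
  intro h
  exact hg (G3_two g (by rw [← neg_add_cancel g, h]))

lemma e_zero (S : Setup n A e) : e 0 = 0 := by
  have h := S.emem 0
  rwa [S.zero, Submodule.mem_bot] at h

lemma piA_zero_apply (S : Setup n A e) (x : O) : piA n e 0 x = 0 := by
  rw [piA, RkO_apply, e_zero S, smul_zero]

noncomputable def Dop (n : QuadraticForm k O) (e : G3 → O) (g : G3) : Module.End k O :=
  piA n e g - piA n e (-g)

lemma Dop_self (S : Setup n A e) {g : G3} (hg : g ≠ 0) {z : O} (hz : z ∈ A g) :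
    Dop n e g z = z := by
  rw [Dop, LinearMap.sub_apply, piA_self S hz, piA_ne S (Ne.symm (neg_ne_self hg)) hz,
    sub_zero]

lemma Dop_negself (S : Setup n A e) {g : G3} (hg : g ≠ 0) {z : O} (hz : z ∈ A (-g)) :
    Dop n e g z = -z := by
  rw [Dop, LinearMap.sub_apply, piA_self S hz, piA_ne S (neg_ne_self hg) hz, zero_sub]

lemma Dop_other (S : Setup n A e) {g γ : G3} (h1 : γ ≠ g) (h2 : γ ≠ -g) {z : O}
    (hz : z ∈ A γ) : Dop n e g z = 0 := by
  rw [Dop, LinearMap.sub_apply, piA_ne S h1 hz, piA_ne S h2 hz, sub_zero]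

lemma Dop_mem_V0 (S : Setup n A e) {g : G3} (hg : g ≠ 0) : Dop n e g ∈ Vsub n A 0 := by
  constructor
  · apply skew_of_homog S
    intro a b x hx y hy
    by_cases hag : a = g
    · subst hag
      rw [Dop_self S hg hx]
      by_cases hbg : b = a
      · subst hbg
        rw [Dop_self S hg hy,
          S.orth b b (fun h => hg (G3_two b h)) x hx y hy, add_zero]
      · by_cases hbn : b = -a
        · subst hbn
          rw [Dop_negself S hg hy, polar_neg_right]
          ring
        · rw [Dop_other S hbg hbn hy,
            S.orth a b (fun h => hbn (eq_neg_of_add_eq_zero_right h)) x hx y hy]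
          simp [polar]
    · by_cases han : a = -g
      · subst han
        rw [Dop_negself S hg hx, polar_neg_left]
        by_cases hbg : b = g
        · subst hbg
          rw [Dop_self S hg hy]; ring
        · by_cases hbn : b = -g
          · subst hbn
            rw [Dop_negself S hg hy, polar_neg_right,
              S.orth (-g) (-g) (fun h => hg (neg_eq_zero.mp (G3_two (-g) h))) x hx y hy]
            ring
          · rw [Dop_other S hbg hbn hy,
              S.orth (-g) b (fun h => hbg (by
                rw [eq_neg_of_add_eq_zero_right h, neg_neg])) x hx y hy]
            simp [polar]
      · rw [Dop_other S hag han hx]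
        have hz0 : polar n (0:O) y = 0 := by simp [polar]
        by_cases hbg : b = g
        · subst b
          rw [Dop_self S hg hy, hz0, zero_add]
          exact S.orth a g (fun h => han (eq_neg_of_add_eq_zero_left h)) x hx y hy
        · by_cases hbn : b = -g
          · subst hbn
            rw [Dop_negself S hg hy, hz0, zero_add, polar_neg_right, neg_eq_zero]
            exact S.orth a (-g) (fun h => hag (by
              rw [eq_neg_of_add_eq_zero_left h, neg_neg])) x hx y hy
          · rw [Dop_other S hbg hbn hy, hz0, zero_add]
            simp [polar]
  · intro γ z hz
    rw [add_zero]
    by_cases h1 : γ = g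
    · subst h1; rw [Dop_self S hg hz]; exact hz
    · by_cases h2 : γ = -g
      · subst h2; rw [Dop_negself S hg hz]; exact neg_mem hz
      · rw [Dop_other S h1 h2 hz]; exact zero_mem _

lemma eigen (S : Setup n A e) {d : Module.End k O} (hd : Graded A 0 d) (g : G3) :
    ∃ l : k, d (e g) = l • e g := by
  have h := hd g (e g) (S.emem g)
  rw [add_zero] at h
  exact exists_scalar S h

lemma eigen_skew (S : Setup n A e) {d : Module.End k O} (hd : Skew n d) {g : G3}
    (hg : g ≠ 0) {l l' : k} (h1 : d (e g) = l • e g) (h2 : d (e (-g)) = l' • e (-g)) :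
    l' = -l := by
  have hs := hd (e g) (e (-g))
  rw [h1, h2, polar_smul_left, polar_smul_right, smul_eq_mul, smul_eq_mul] at hs
  have hb : polar n (e g) (e (-g)) = bet n e g := rfl
  rw [hb] at hs
  have : (l + l') * bet n e g = 0 := by linear_combination hs
  rcases mul_eq_zero.mp this with h | h
  · exact eq_neg_of_add_eq_zero_right h
  · exact absurd h (bet_ne S hg)

lemma comm_V0 (S : Setup n A e) {d d' : Module.End k O} (hd : Graded A 0 d)
    (hd' : Graded A 0 d') : d * d' = d' * d := by
  apply ext_on S
  intro γ x hx
  rcases eq_or_ne γ 0 with rfl | hγ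
  · rw [S.zero, Submodule.mem_bot] at hx
    rw [hx, map_zero, map_zero]
  · obtain ⟨l, hl⟩ := eigen S hd γ
    obtain ⟨l', hl'⟩ := eigen S hd' γ
    obtain ⟨t, rfl⟩ := exists_scalar S hx
    simp only [Module.End.mul_apply, _root_.map_smul, hl, hl', smul_smul]
    congr 1
    ring

/-- the four chosen representatives -/
def ggf : Fin 4 → G3 := ![(0,1),(1,0),(1,1),(1,2)]

lemma ggf_ne_zero : ∀ i, ggf i ≠ 0 := by decide
lemma ggf_inj : ∀ i j, ggf i = ggf j → i = j := by decide
lemma ggf_ne_neg : ∀ i j, ggf i ≠ -(ggf j) := by decide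
lemma ggf_covers : ∀ h : G3, h ≠ 0 → ∃ i, h = ggf i ∨ h = -(ggf i) := by decide

lemma Dop_indep (S : Setup n A e) :
    LinearIndependent k (fun i : Fin 4 => Dop n e (ggf i)) := by
  rw [Fintype.linearIndependent_iff]
  intro c hc j
  have h := DFunLike.congr_fun hc (e (ggf j))
  rw [LinearMap.sum_apply, LinearMap.zero_apply, Finset.sum_eq_single j] at h
  · rw [LinearMap.smul_apply, Dop_self S (ggf_ne_zero j) (S.emem (ggf j))] at h
    rcases smul_eq_zero.mp h with h | h
    · exact h
    · exact absurd h (S.ene _ (ggf_ne_zero j))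
  · intro i _ hij
    rw [LinearMap.smul_apply,
      Dop_other S (fun h' => hij ((ggf_inj j i h').symm)) (ggf_ne_neg j i) (S.emem (ggf j)),
      smul_zero]
  · intro h'; exact absurd (Finset.mem_univ j) h'

lemma V0_le_span (S : Setup n A e) :
    Vsub n A 0 ≤ Submodule.span k (Set.range (fun i : Fin 4 => Dop n e (ggf i))) := by
  intro d hd
  obtain ⟨hsk, hgr⟩ := hd
  choose l hl using eigen S hgr
  have key : d = ∑ i : Fin 4, l (ggf i) • Dop n e (ggf i) := by
    apply ext_on S
    intro γ x hx
    rcases eq_or_ne γ 0 with rfl | hγ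
    · rw [S.zero, Submodule.mem_bot] at hx
      rw [hx, map_zero, map_zero]
    · obtain ⟨t, rfl⟩ := exists_scalar S hx
      obtain ⟨i, hi | hi⟩ := ggf_covers γ hγ
      · subst hi
        rw [LinearMap.sum_apply, Finset.sum_eq_single i]
        · rw [LinearMap.smul_apply, _root_.map_smul, _root_.map_smul, hl,
            Dop_self S (ggf_ne_zero i) (S.emem (ggf i))]
          module
        · intro j _ hij
          rw [LinearMap.smul_apply, _root_.map_smul,
            Dop_other S (fun h' => hij ((ggf_inj i j h').symm)) (ggf_ne_neg i j)
              (S.emem (ggf i)), smul_zero, smul_zero]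
        · intro h'; exact absurd (Finset.mem_univ i) h'
      · subst hi
        have hls : l (-(ggf i)) = -(l (ggf i)) :=
          eigen_skew S hsk (ggf_ne_zero i) (hl (ggf i)) (hl (-(ggf i)))
        rw [LinearMap.sum_apply, Finset.sum_eq_single i]
        · rw [LinearMap.smul_apply, _root_.map_smul, _root_.map_smul, hl, hls,
            Dop_negself S (ggf_ne_zero i) (S.emem (-(ggf i)))]
          module
        · intro j _ hij
          rw [LinearMap.smul_apply, _root_.map_smul,
            Dop_other S (fun h' => ggf_ne_neg j i h'.symm)
              (fun h' => hij ((ggf_inj i j (neg_injective h')).symm))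
              (S.emem (-(ggf i))), smul_zero, smul_zero]
        · intro h'; exact absurd (Finset.mem_univ i) h'
  rw [key]
  exact Submodule.sum_mem _ fun i _ =>
    Submodule.smul_mem _ _ (Submodule.subset_span (Set.mem_range_self i))

lemma V0_finrank (S : Setup n A e) : Module.finrank k (Vsub n A 0) = 4 := by
  have hspan : Vsub n A 0
      = Submodule.span k (Set.range (fun i : Fin 4 => Dop n e (ggf i))) := by
    apply le_antisymm (V0_le_span S)
    rw [Submodule.span_le]
    rintro _ ⟨i, rfl⟩
    exact Dop_mem_V0 S (ggf_ne_zero i)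
  rw [hspan, finrank_span_eq_card (Dop_indep S), Fintype.card_fin]

lemma normalizer (S : Setup n A e) {d : Module.End k O} (hd : Skew n d)
    (hbr : ∀ g : G3, g ≠ 0 → Graded A 0 (d * Dop n e g - Dop n e g * d)) :
    Graded A 0 d := by
  intro γ z hz
  rw [add_zero]
  rcases eq_or_ne γ 0 with rfl | hγ
  · rw [S.zero, Submodule.mem_bot] at hz
    rw [hz, map_zero]; exact zero_mem _
  obtain ⟨t, rfl⟩ := exists_scalar S hz
  rw [_root_.map_smul]
  refine Submodule.smul_mem _ _ ?_
  have hrepr : d (e γ) = ∑ c : G3, piA n e c (d (e γ)) := by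
    rw [← LinearMap.sum_apply, sum_piA S, LinearMap.id_apply]
  have hvan : ∀ c : G3, c ≠ γ → piA n e c (d (e γ)) = 0 := by
    intro c hc
    rcases eq_or_ne c 0 with rfl | hc0
    · exact piA_zero_apply S _
    have hw := hbr γ hγ γ (e γ) (S.emem γ)
    rw [add_zero] at hw
    have hw0 : piA n e c ((d * Dop n e γ - Dop n e γ * d) (e γ)) = 0 :=
      piA_ne S (Ne.symm hc) hw
    rw [LinearMap.sub_apply, Module.End.mul_apply, Module.End.mul_apply,
      Dop_self S hγ (S.emem γ), _root_.map_sub] at hw0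
    -- compute piA c (Dop γ u) for u := d (e γ)
    set u := d (e γ) with hu
    have hDop : piA n e c (Dop n e γ u) =
        (if c = -γ then -(piA n e c u) else 0) := by
      rw [Dop, LinearMap.sub_apply, _root_.map_sub, piA_ne S (Ne.symm hc) (piA_mem S γ u)]
      by_cases hcn : c = -γ
      · rw [if_pos hcn]
        have : piA n e c (piA n e (-γ) u) = piA n e c u := by
          rw [hcn] at *
          rw [piA_self S (piA_mem S (-γ) u)]
        rw [this, zero_sub]
      · rw [if_neg hcn, piA_ne S (fun h' => hcn h'.symm) (piA_mem S (-γ) u), zero_sub, neg_zero]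
    by_cases hcn : c = -γ
    · rw [hDop, if_pos hcn, sub_neg_eq_add] at hw0
      have h2 : (2:k) • piA n e c u = 0 := by rw [two_smul]; exact hw0
      rcases smul_eq_zero.mp h2 with h | h
      · exact absurd h S.two
      · exact h
    · rw [hDop, if_neg hcn, sub_zero] at hw0
      exact hw0
  rw [hrepr, Finset.sum_eq_single γ (fun c _ hc => hvan c hc)
    (fun h' => absurd (Finset.mem_univ γ) h')]
  exact piA_mem S γ _

/-! ### rank-two skew operators and the nonzero components -/

noncomputable def Top (n : QuadraticForm k O) (α : k) (p q : O) : Module.End k O :=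
  α • ((n.polarBilin p).smulRight q - (n.polarBilin q).smulRight p)

lemma Top_apply (α : k) (p q u : O) :
    Top n α p q u = α • (polar n p u • q - polar n q u • p) := by
  simp [Top, polarBilin_apply_apply]

lemma Top_skew (α : k) (p q : O) : Skew n (Top n α p q) := by
  intro x y
  rw [Top_apply, Top_apply]
  simp only [polar_smul_left, polar_smul_right, polar_sub_left, polar_sub_right,
    smul_eq_mul]
  rw [polar_comm (⇑n) x q, polar_comm (⇑n) x p]
  ring

def iota (g : G3) : ℕ := g.1.val * 3 + g.2.val

def sig (μ g : G3) : G3 := -g - μ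

noncomputable def Sset (μ : G3) : Finset G3 :=
  Finset.univ.filter (fun g => g ≠ 0 ∧ g ≠ -μ ∧ iota g < iota (sig μ g))

-- decidable arithmetic facts about `G3`
lemma sig_invol : ∀ μ g : G3, sig μ (sig μ g) = g := by decide
lemma sig_add : ∀ μ g : G3, sig μ g + μ = -g := by decide
lemma neg_add_mu : ∀ μ g : G3, -(g + μ) = sig μ g := by decide
lemma mu_two : ∀ μ : G3, μ + μ = -μ := by decide
lemma S_ne_zero : ∀ μ g : G3, g ∈ Sset μ → g ≠ 0 := by decide
lemma S_ne_negmu : ∀ μ g : G3, g ∈ Sset μ → g ≠ -μ := by decide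
lemma S_ne_mu : ∀ μ g : G3, g ∈ Sset μ → g ≠ μ := by decide
lemma S_sig_ne_zero : ∀ μ g : G3, g ∈ Sset μ → sig μ g ≠ 0 := by decide
lemma S_sig_ne : ∀ μ g : G3, g ∈ Sset μ → sig μ g ≠ g := by decide
lemma S_addmu_ne : ∀ μ g : G3, g ∈ Sset μ → g + μ ≠ 0 := by decide
lemma S_two_ne : ∀ μ g : G3, g ∈ Sset μ → g + μ + g ≠ 0 := by decide
lemma S_not_sig : ∀ μ g h : G3, g ∈ Sset μ → h ∈ Sset μ → h ≠ sig μ g := by decide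
lemma S_negmu_not : ∀ μ g : G3, g ∈ Sset μ → -μ ≠ g ∧ -μ ≠ sig μ g := by decide
lemma S_mu_not : ∀ μ g : G3, μ ≠ 0 → g ∈ Sset μ → μ ≠ g ∧ μ ≠ sig μ g := by decide
lemma S_trichotomy : ∀ μ γ : G3, μ ≠ 0 → γ ≠ 0 → γ ≠ μ → γ ≠ -μ →
    γ ∈ Sset μ ∨ sig μ γ ∈ Sset μ := by decide
lemma S_card : ∀ μ : G3, μ ≠ 0 → (Sset μ).card = 3 := by decide
lemma mu_ne_negmu : ∀ μ : G3, μ ≠ 0 → μ ≠ -μ := by decide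

/-- the basic degree-`μ` operators -/
noncomputable def Eop (n : QuadraticForm k O) (e : G3 → O) (μ g : G3) :
    Module.End k O :=
  Top n (bet n e g)⁻¹ (e (-g)) (e (g + μ))

lemma polar_e (S : Setup n A e) {c c' : G3} (h : c + c' ≠ 0) :
    polar n (e c) (e c') = 0 :=
  S.orth c c' h (e c) (S.emem c) (e c') (S.emem c')

lemma Eop_skew (μ g : G3) : Skew n (Eop n e μ g) := Top_skew _ _ _

lemma Eop_e_self (S : Setup n A e) {μ g : G3} (hg : g ≠ 0) (hgm : g + μ + g ≠ 0) :
    Eop n e μ g (e g) = e (g + μ) := by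
  rw [Eop, Top_apply]
  have h1 : polar n (e (-g)) (e g) = bet n e g := by
    rw [← bet_neg, bet, neg_neg]
  have h2 : polar n (e (g + μ)) (e g) = 0 := polar_e S hgm
  rw [h1, h2, zero_smul, sub_zero, smul_smul, inv_mul_cancel₀ (bet_ne S hg), one_smul]

lemma Eop_e_sig (S : Setup n A e) {μ g : G3} (hg : g ≠ 0) (hgm : g + μ + g ≠ 0) :
    Eop n e μ g (e (sig μ g)) = (-(bet n e (g + μ) * (bet n e g)⁻¹)) • e (-g) := by
  rw [Eop, Top_apply]
  have h1 : polar n (e (-g)) (e (sig μ g)) = 0 := by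
    refine polar_e S ?_
    intro h
    apply hgm
    rw [show sig μ g = -g - μ from rfl] at h
    rw [show g + μ + g = -(-g + (-g - μ)) by abel, h, neg_zero]
  have h2 : polar n (e (g + μ)) (e (sig μ g)) = bet n e (g + μ) := by
    rw [← neg_add_mu μ g, bet]
  rw [h1, h2, zero_smul, zero_sub, smul_neg, smul_smul]
  rw [neg_smul, mul_comm]

lemma Eop_other (S : Setup n A e) {μ g c : G3} (h1 : c ≠ g) (h2 : c ≠ sig μ g)
    {z : O} (hz : z ∈ A c) : Eop n e μ g z = 0 := by
  rw [Eop, Top_apply]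
  have k1 : polar n (e (-g)) z = 0 := by
    rw [polar_comm]
    exact S.orth c (-g) (fun h => h1 (by rw [eq_neg_of_add_eq_zero_left h, neg_neg]))
      z hz (e (-g)) (S.emem (-g))
  have k2 : polar n (e (g + μ)) z = 0 := by
    rw [polar_comm]
    refine S.orth c (g + μ) (fun h => h2 ?_) z hz (e (g + μ)) (S.emem (g + μ))
    rw [eq_neg_of_add_eq_zero_left h, neg_add_mu]
  rw [k1, k2, zero_smul, zero_smul, sub_zero, smul_zero]

lemma Eop_mem_V (S : Setup n A e) {μ g : G3} (hS : g ∈ Sset μ) :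
    Eop n e μ g ∈ Vsub n A μ := by
  have hg : g ≠ 0 := S_ne_zero μ g hS
  have hgm : g + μ + g ≠ 0 := S_two_ne μ g hS
  constructor
  · exact Eop_skew μ g
  · intro γ z hz
    rcases eq_or_ne γ g with rfl | h1
    · obtain ⟨t, rfl⟩ := exists_scalar S hz
      rw [_root_.map_smul, Eop_e_self S hg hgm]
      exact Submodule.smul_mem _ _ (S.emem (γ + μ))
    · rcases eq_or_ne γ (sig μ g) with rfl | h2
      · obtain ⟨t, rfl⟩ := exists_scalar S hz
        rw [_root_.map_smul, Eop_e_sig S hg hgm]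
        rw [show sig μ g + μ = -g from sig_add μ g]
        exact Submodule.smul_mem _ _ (Submodule.smul_mem _ _ (S.emem (-g)))
      · rw [Eop_other S h1 h2 hz]
        exact zero_mem _

lemma S_sig_ne_negmu : ∀ μ g : G3, g ∈ Sset μ → sig μ g ≠ -μ := by decide

lemma Eop_indep (S : Setup n A e) {μ : G3} (hμ : μ ≠ 0) :
    LinearIndependent k (fun g : ↥(Sset μ) => Eop n e μ (g : G3)) := by
  rw [Fintype.linearIndependent_iff]
  intro c hc j
  have h := DFunLike.congr_fun hc (e (j : G3))
  rw [LinearMap.sum_apply, LinearMap.zero_apply, Finset.sum_eq_single j] at h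
  · rw [LinearMap.smul_apply,
      Eop_e_self S (S_ne_zero μ j j.2) (S_two_ne μ j j.2)] at h
    rcases smul_eq_zero.mp h with h | h
    · exact h
    · exact absurd h (S.ene _ (S_addmu_ne μ j j.2))
  · intro i _ hij
    rw [LinearMap.smul_apply,
      Eop_other S (show ((j : G3)) ≠ ((i : G3)) from
          fun h' => hij (Subtype.ext h'.symm))
        (S_not_sig μ i j i.2 j.2) (S.emem (j : G3)), smul_zero]
  · intro h'; exact absurd (Finset.mem_univ j) h'

lemma V_le_span (S : Setup n A e) {μ : G3} (hμ : μ ≠ 0) :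
    Vsub n A μ ≤ Submodule.span k
      (Set.range (fun g : ↥(Sset μ) => Eop n e μ (g : G3))) := by
  intro d hd
  obtain ⟨hsk, hgr⟩ := hd
  set cg : G3 → k := fun g => (bet n e (g + μ))⁻¹ * polar n (d (e g)) (e (-(g + μ)))
    with hcg
  have hc : ∀ g : G3, g ≠ 0 → g ≠ -μ → d (e g) = cg g • e (g + μ) := by
    intro g hg0 hgm
    have hmem : d (e g) ∈ A (g + μ) := hgr g (e g) (S.emem g)
    obtain ⟨t, ht⟩ := exists_scalar S hmem
    have hgm0 : g + μ ≠ 0 := fun h => hgm (eq_neg_of_add_eq_zero_left h)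
    have hct : cg g = t := by
      rw [hcg]
      simp only
      rw [ht, polar_smul_left, smul_eq_mul,
        show polar n (e (g + μ)) (e (-(g + μ))) = bet n e (g + μ) from rfl]
      field_simp [bet_ne S hgm0]
    rw [ht, hct]
  have hdneg : d (e (-μ)) = 0 := by
    have hmem : d (e (-μ)) ∈ A (-μ + μ) := hgr _ _ (S.emem (-μ))
    rwa [neg_add_cancel, S.zero, Submodule.mem_bot] at hmem
  have hdmu : d (e μ) = 0 := by
    have h2 := hsk (e μ) (e μ)
    rw [polar_comm (⇑n) (e μ) (d (e μ))] at h2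
    have hp : polar n (d (e μ)) (e μ) = 0 := by
      have h3 : (2 : k) * polar n (d (e μ)) (e μ) = 0 := by linear_combination h2
      rcases mul_eq_zero.mp h3 with h | h
      · exact absurd h S.two
      · exact h
    have hmu : μ ≠ -μ := mu_ne_negmu μ hμ
    rw [hc μ hμ hmu, polar_smul_left, smul_eq_mul, mu_two μ,
      show polar n (e (-μ)) (e μ) = bet n e (-μ) by rw [bet, neg_neg],
      bet_neg] at hp
    rcases mul_eq_zero.mp hp with h | h
    · rw [hc μ hμ hmu, h, zero_smul]
    · exact absurd h (bet_ne S hμ)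
  have hrel : ∀ g ∈ Sset μ,
      cg (sig μ g) = -(bet n e (g + μ) * (bet n e g)⁻¹) * cg g := by
    intro g hS
    have hg0 := S_ne_zero μ g hS
    have h2 := hsk (e g) (e (sig μ g))
    rw [hc g hg0 (S_ne_negmu μ g hS),
      hc (sig μ g) (S_sig_ne_zero μ g hS) (S_sig_ne_negmu μ g hS),
      sig_add μ g, polar_smul_left, polar_smul_right, smul_eq_mul, smul_eq_mul,
      show polar n (e (g + μ)) (e (sig μ g)) = bet n e (g + μ) by
        rw [← neg_add_mu μ g, bet],
      show polar n (e g) (e (-g)) = bet n e g from rfl] at h2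
    field_simp [bet_ne S hg0]
    linear_combination h2
  have key : d = ∑ g ∈ Sset μ, cg g • Eop n e μ g := by
    apply ext_on S
    intro γ x hx
    obtain ⟨t, rfl⟩ := exists_scalar S hx
    have hsuf : d (e γ) = ∑ g ∈ Sset μ, cg g • Eop n e μ g (e γ) := by
      rcases eq_or_ne γ 0 with rfl | hγ0
      · simp [e_zero S]
      by_cases hγμ : γ = μ
      · subst μ
        rw [hdmu, Finset.sum_eq_zero]
        intro g hg
        rw [Eop_other S (S_mu_not γ g hμ hg).1 (S_mu_not γ g hμ hg).2
          (S.emem γ), smul_zero]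
      by_cases hγn : γ = -μ
      · rw [hγn, hdneg, Finset.sum_eq_zero]
        intro g hg
        rw [Eop_other S (S_negmu_not μ g hg).1 (S_negmu_not μ g hg).2
          (S.emem (-μ)), smul_zero]
      rcases S_trichotomy μ γ hμ hγ0 hγμ hγn with hγS | hγS
      · rw [Finset.sum_eq_single_of_mem γ hγS]
        · rw [hc γ hγ0 hγn, Eop_e_self S hγ0 (S_two_ne μ γ hγS)]
        · intro g hg hgγ
          rw [Eop_other S (Ne.symm hgγ) (S_not_sig μ g γ hg hγS)
            (S.emem γ), smul_zero]
      · set g0 := sig μ γ with hg0def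
        have hγeq : γ = sig μ g0 := (sig_invol μ γ).symm
        have hγnotS : γ ∉ Sset μ := fun hmem =>
          (S_not_sig μ g0 γ hγS hmem) hγeq
        rw [Finset.sum_eq_single_of_mem g0 hγS]
        · have h1 : Eop n e μ g0 (e γ) =
              (-(bet n e (g0 + μ) * (bet n e g0)⁻¹)) • e (-g0) := by
            conv_lhs => rw [hγeq]
            exact Eop_e_sig S (S_ne_zero μ g0 hγS) (S_two_ne μ g0 hγS)
          have h2 : γ + μ = -g0 := by rw [hγeq, sig_add]
          have h3 : cg γ = -(bet n e (g0 + μ) * (bet n e g0)⁻¹) * cg g0 := by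
            conv_lhs => rw [hγeq]
            exact hrel g0 hγS
          rw [hc γ hγ0 hγn, h1, h2, h3, smul_smul]
          congr 1
          ring
        · intro g hg hgne
          refine Eq.trans (congrArg _ (Eop_other S ?_ ?_ (S.emem γ))) (smul_zero _)
          · exact fun h => hγnotS (h ▸ hg)
          · intro h
            apply hgne
            rw [hg0def, h, sig_invol]
    rw [_root_.map_smul, _root_.map_smul, hsuf, LinearMap.sum_apply]
    simp only [LinearMap.smul_apply]
  rw [key]
  exact Submodule.sum_mem _ fun g hg =>
    Submodule.smul_mem _ _ (Submodule.subset_span ⟨⟨g, hg⟩, rfl⟩)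

lemma V_finrank (S : Setup n A e) {μ : G3} (hμ : μ ≠ 0) :
    Module.finrank k (Vsub n A μ) = 3 := by
  have hspan : Vsub n A μ = Submodule.span k
      (Set.range (fun g : ↥(Sset μ) => Eop n e μ (g : G3))) := by
    apply le_antisymm (V_le_span S hμ)
    rw [Submodule.span_le]
    rintro _ ⟨g, rfl⟩
    exact Eop_mem_V S g.2
  rw [hspan, finrank_span_eq_card (Eop_indep S hμ), Fintype.card_coe, S_card μ hμ]

/-! ### symmetric composition identities -/

lemma comp_L1 (mul : O →ₗ[k] O →ₗ[k] O)
    (hnondeg : ∀ x : O, (∀ y : O, polar n x y = 0) → x = 0)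
    (hcomp : ∀ x y : O, n (mul x y) = n x * n y)
    (hassoc : ∀ x y z : O, polar n (mul x y) z = polar n x (mul y z)) :
    ∀ x y : O, mul (mul x y) x = n x • y := by
  have key : ∀ x y z : O, polar n (mul (mul x y) x) z = n x * polar n y z := by
    intro x y z
    rw [hassoc (mul x y) x z]
    simp only [polar]
    rw [← map_add (mul x), hcomp, hcomp, hcomp]
    ring
  intro x y
  have hz : ∀ z, polar n (mul (mul x y) x - n x • y) z = 0 := by
    intro z
    rw [polar_sub_left, polar_smul_left, smul_eq_mul, key]
    ring
  exact sub_eq_zero.mp (hnondeg _ hz)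

lemma comp_L2 (mul : O →ₗ[k] O →ₗ[k] O)
    (hnondeg : ∀ x : O, (∀ y : O, polar n x y = 0) → x = 0)
    (hcomp : ∀ x y : O, n (mul x y) = n x * n y)
    (hassoc : ∀ x y z : O, polar n (mul x y) z = polar n x (mul y z)) :
    ∀ x y z : O, mul (mul x y) z + mul (mul z y) x = polar n x z • y := by
  intro x y z
  have h1 := comp_L1 mul hnondeg hcomp hassoc (x + z) y
  have h2 := comp_L1 mul hnondeg hcomp hassoc x y
  have h3 := comp_L1 mul hnondeg hcomp hassoc z y
  have hexp : mul (mul (x + z) y) (x + z) =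
      mul (mul x y) x + mul (mul x y) z + mul (mul z y) x + mul (mul z y) z := by
    simp only [map_add, LinearMap.add_apply]
    abel
  have hn : n (x + z) = n x + n z + polar n x z := by
    simp only [polar]
    ring
  rw [hexp, hn] at h1
  have hgoal : mul (mul x y) z + mul (mul z y) x =
      (n x + n z + polar n x z) • y - n x • y - n z • y := by
    rw [← h1, h2, h3]
    abel
  rw [hgoal, add_smul, add_smul]
  abel

lemma comp_orth (mul : O →ₗ[k] O →ₗ[k] O)
    (hnondeg : ∀ x : O, (∀ y : O, polar n x y = 0) → x = 0)
    (hcomp : ∀ x y : O, n (mul x y) = n x * n y)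
    (hassoc : ∀ x y z : O, polar n (mul x y) z = polar n x (mul y z))
    (hind : iSupIndep A)
    (hgrmul : ∀ g h : G3, ∀ x ∈ A g, ∀ y ∈ A h, mul x y ∈ A (g + h))
    {b : G3} {y : O} (hy : y ∈ A b) (hyne : y ≠ 0) :
    ∀ a c : G3, a + c ≠ 0 → ∀ x ∈ A a, ∀ z ∈ A c, polar n x z = 0 := by
  intro a c hac x hx z hz
  have h1 : mul (mul x y) z ∈ A (a + b + c) :=
    hgrmul _ _ _ (hgrmul a b x hx y hy) z hz
  have h2 : mul (mul z y) x ∈ A (a + b + c) := by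
    have h := hgrmul _ _ _ (hgrmul c b z hz y hy) x hx
    have heq : c + b + a = a + b + c := by abel
    rwa [heq] at h
  have h3 : polar n x z • y ∈ A (a + b + c) := by
    rw [← comp_L2 mul hnondeg hcomp hassoc x y z]
    exact add_mem h1 h2
  have h4 : polar n x z • y ∈ A b := Submodule.smul_mem _ _ hy
  have hne : a + b + c ≠ b := by
    intro h
    apply hac
    have h' : a + c = a + b + c - b := by abel
    rw [h, sub_self] at h'
    exact h'
  have hdisj : Disjoint (A (a + b + c)) (A b) := hind.pairwiseDisjoint hne
  have h0 : polar n x z • y = 0 := Submodule.disjoint_def.mp hdisj _ h3 h4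
  rcases smul_eq_zero.mp h0 with h | h
  · exact h
  · exact absurd h hyne

end OkuboAux

open OkuboAux

/-- a standard ℤ₃²-grading of an Okubo algebra `(O,*,n)`
(char k ≠ 2,3) induces a grading `o(O,n) = ⊕_μ o(O,n)_μ` of the orthogonal
Lie algebra, in which `o(O,n)_0` is a 4-dimensional Cartan subalgebra
(abelian, hence nilpotent, and self-normalizing) and `dim o(O,n)_μ = 3` for
every `μ ≠ 0`. -/
theorem okubo_standard_grading_orthogonal_Lie
    {k : Type*} [Field k] {O : Type*} [AddCommGroup O] [Module k O]
    (hchar2 : ringChar k ≠ 2) (hchar3 : ringChar k ≠ 3)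
    (mul : O →ₗ[k] O →ₗ[k] O) (n : QuadraticForm k O)
    (hnondeg : ∀ x : O, (∀ y : O, polar n x y = 0) → x = 0)
    (hcomp : ∀ x y : O, n (mul x y) = n x * n y)
    (hassoc : ∀ x y z : O, polar n (mul x y) z = polar n x (mul y z))
    (hdim : Module.finrank k O = 8)
    (hnopara : ¬ ∃ e : O, ∀ x : O,
      mul e x = polar n e x • e - x ∧ mul x e = polar n e x • e - x)
    (A : ZMod 3 × ZMod 3 → Submodule k O)
    (hdecomp : DirectSum.IsInternal A)
    (hgrmul : ∀ g h : ZMod 3 × ZMod 3, ∀ x ∈ A g, ∀ y ∈ A h, mul x y ∈ A (g + h))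
    (hzero : A 0 = ⊥)
    (hone : ∀ g : ZMod 3 × ZMod 3, g ≠ 0 → Module.finrank k (A g) = 1) :
    ∀ (inO : Module.End k O → Prop)
      (inOmu : (ZMod 3 × ZMod 3) → Module.End k O → Prop),
      (∀ d : Module.End k O,
        inO d ↔ ∀ x y : O, polar n (d x) y + polar n x (d y) = 0) →
      (∀ (μ : ZMod 3 × ZMod 3) (d : Module.End k O),
        inOmu μ d ↔ (inO d ∧ ∀ γ : ZMod 3 × ZMod 3, ∀ z ∈ A γ, d z ∈ A (γ + μ))) →
      ( -- o(O,n) = ⊕_μ o(O,n)_μ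
        (∀ d : Module.End k O, inO d →
          ∃! f : (ZMod 3 × ZMod 3) → Module.End k O,
            (∀ μ, inOmu μ (f μ)) ∧ d = ∑ μ : ZMod 3 × ZMod 3, f μ) ∧
        -- it is a grading of the Lie algebra
        (∀ (μ ν : ZMod 3 × ZMod 3) (d d' : Module.End k O),
          inOmu μ d → inOmu ν d' → inOmu (μ + ν) (d * d' - d' * d)) ∧
        -- o(O,n)_0 is a 4-dimensional Cartan subalgebra
        ((∃ V : Submodule k (Module.End k O),
            (V : Set (Module.End k O)) = {d | inOmu 0 d} ∧
            Module.finrank k V = 4) ∧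
         (∀ d d' : Module.End k O, inOmu 0 d → inOmu 0 d' → d * d' = d' * d) ∧
         (∀ d : Module.End k O, inO d →
            (∀ d' : Module.End k O, inOmu 0 d' → inOmu 0 (d * d' - d' * d)) →
            inOmu 0 d)) ∧
        -- dim o(O,n)_μ = 3 for μ ≠ 0
        (∀ μ : ZMod 3 × ZMod 3, μ ≠ 0 →
          ∃ V : Submodule k (Module.End k O),
            (V : Set (Module.End k O)) = {d | inOmu μ d} ∧
            Module.finrank k V = 3) ) := by
  intro inO inOmu hO hOmu
  classical
  have hfd : FiniteDimensional k O := FiniteDimensional.of_finrank_eq_succ (n := 7) hdim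
  -- choose generators of the one-dimensional components
  have hchoice : ∀ g : G3, g ≠ 0 →
      ∃ v : O, v ∈ A g ∧ v ≠ 0 ∧ A g = Submodule.span k {v} := by
    intro g hg
    have h1 : Module.finrank k (A g) = 1 := hone g hg
    have hbot : A g ≠ ⊥ := by
      intro h
      rw [h] at h1
      simp [finrank_bot] at h1
    obtain ⟨v, hv, hvne⟩ := (Submodule.ne_bot_iff _).mp hbot
    refine ⟨v, hv, hvne, ?_⟩
    have hle : Submodule.span k {v} ≤ A g := by
      rw [Submodule.span_le, Set.singleton_subset_iff]
      exact hv
    exact (Submodule.eq_of_le_of_finrank_le hle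
      (by rw [h1, finrank_span_singleton hvne])).symm
  choose ev hev1 hev2 hev3 using hchoice
  set e : G3 → O := fun g => if h : g = 0 then 0 else ev g h with he
  have hemem : ∀ g, e g ∈ A g := by
    intro g
    by_cases h : g = 0
    · rw [he]; simp only [dif_pos h]; exact zero_mem _
    · rw [he]; simp only [dif_neg h]; exact hev1 g h
  have hene : ∀ g, g ≠ 0 → e g ≠ 0 := by
    intro g h
    rw [he]; simp only [dif_neg h]; exact hev2 g h
  have hespan : ∀ g, A g = Submodule.span k {e g} := by
    intro g
    by_cases h : g = 0
    · rw [he]; simp only [dif_pos h]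
      rw [h, hzero, Submodule.span_zero_singleton]
    · rw [he]; simp only [dif_neg h]; exact hev3 g h
  have hb10 : ((1, 0) : G3) ≠ 0 := by decide
  have S : Setup n A e :=
    { nondeg := hnondeg
      sup := hdecomp.submodule_iSup_eq_top
      ind := hdecomp.submodule_iSupIndep
      zero := hzero
      emem := hemem
      ene := hene
      espan := hespan
      orth := comp_orth mul hnondeg hcomp hassoc hdecomp.submodule_iSupIndep
        hgrmul (hemem (1, 0)) (hene _ hb10)
      two := Ring.two_ne_zero hchar2 }
  have hOiff : ∀ d : Module.End k O, inO d ↔ Skew n d := hO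
  have hVmem : ∀ (μ : G3) (d : Module.End k O), inOmu μ d ↔ d ∈ Vsub n A μ := by
    intro μ d
    rw [hOmu μ d, hOiff d]
    exact Iff.rfl
  refine ⟨?_, ?_, ⟨?_, ?_, ?_⟩, ?_⟩
  · -- decomposition
    intro d hd
    have hsk : Skew n d := (hOiff d).mp hd
    refine ⟨fun μ => Fdec n e d μ, ⟨?_, Fdec_sum S d⟩, ?_⟩
    · intro μ
      exact (hVmem μ _).mpr ⟨Fdec_skew S hsk μ, Fdec_graded S d μ⟩
    · rintro f ⟨hf1, hf2⟩
      funext μ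
      exact Fdec_unique S (fun ν => ((hVmem ν (f ν)).mp (hf1 ν)).2) hf2 μ
  · -- bracket grading
    intro μ ν d d' h1 h2
    obtain ⟨hs1, hg1⟩ := (hVmem μ d).mp h1
    obtain ⟨hs2, hg2⟩ := (hVmem ν d').mp h2
    exact (hVmem _ _).mpr ⟨skew_bracket hs1 hs2, graded_bracket hg1 hg2⟩
  · -- V0 has dimension 4
    refine ⟨Vsub n A 0, ?_, V0_finrank S⟩
    ext d
    rw [SetLike.mem_coe, Set.mem_setOf_eq, hVmem 0 d]
  · -- abelian
    intro d d' h h'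
    exact comm_V0 S ((hVmem 0 d).mp h).2 ((hVmem 0 d').mp h').2
  · -- self-normalizing
    intro d hd hbr
    refine (hVmem 0 d).mpr ⟨(hOiff d).mp hd, ?_⟩
    apply normalizer S ((hOiff d).mp hd)
    intro g hg
    have hDg := Dop_mem_V0 S hg
    have hmem := hbr (Dop n e g) ((hVmem 0 _).mpr hDg)
    exact ((hVmem 0 _).mp hmem).2
  · -- μ ≠ 0 components have dimension 3
    intro μ hμ
    refine ⟨Vsub n A μ, ?_, V_finrank S hμ⟩
    ext d
    rw [SetLike.mem_coe, Set.mem_setOf_eq, hVmem μ d]
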